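/- The stabilizer in (ℤ/7)² of the point (-1 : 0 : ζ₇) ∈ F under the action φ is the cyclic subgroup generated by (1,0); the stabilizer of (-1 : ζ₇ : 0) is generated by (0,1); and the stabilizer of (0 : -1 : ζ₇) is generated by (6,6). -/
import Mathlib


/-- The diagonal action of `(ℤ/7)²` on `ℂ³`:
`(a,b)` sends `(x₀, x₁, x₂)` to `(x₀, ζ₇ᵃ x₁, ζ₇ᵇ x₂)`. -/
noncomputable def diagAct (ζ : ℂ) (g : ZMod 7 × ZMod 7) (v : Fin 3 → ℂ) : Fin 3 → ℂ :=
  ![v 0, ζ ^ g.1.val * v 1, ζ ^ g.2.val * v 2]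

/-- The stabilizer of a point of `F ⊂ ℙ²` represented by the vector `v`: the subgroup of
elements of `(ℤ/7)²` fixing the point projectively, i.e. sending `v` to a nonzero scalar
multiple of itself. -/
noncomputable def projStabilizer (ζ : ℂ) (v : Fin 3 → ℂ) : Set (ZMod 7 × ZMod 7) :=
  {g | ∃ c : ℂ, c ≠ 0 ∧ diagAct ζ g v = c • v}

lemma zmod_smul_cast (a : ZMod 7) : ((a.val : ℤ) • (1 : ZMod 7)) = a := by
  rw [zsmul_eq_mul, mul_one]
  push_cast
  simp [ZMod.natCast_val]

/-- The stabilizer in `(ℤ/7)²` of `(-1 : 0 : ζ₇) ∈ F` under the action `φ` is the cyclic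
subgroup generated by `(1,0)`; the stabilizer of `(-1 : ζ₇ : 0)` is generated by `(0,1)`;
and the stabilizer of `(0 : -1 : ζ₇)` is generated by `(6,6)`. -/
theorem fermat_septic_stabilizers (ζ : ℂ) (hζ : IsPrimitiveRoot ζ 7) :
    projStabilizer ζ ![-1, 0, ζ] =
      (AddSubgroup.zmultiples ((1 : ZMod 7), (0 : ZMod 7)) : Set (ZMod 7 × ZMod 7)) ∧
    projStabilizer ζ ![-1, ζ, 0] =
      (AddSubgroup.zmultiples ((0 : ZMod 7), (1 : ZMod 7)) : Set (ZMod 7 × ZMod 7)) ∧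
    projStabilizer ζ ![0, -1, ζ] =
      (AddSubgroup.zmultiples ((6 : ZMod 7), (6 : ZMod 7)) : Set (ZMod 7 × ZMod 7)) := by
  have hne : ζ ≠ 0 := hζ.ne_zero (by norm_num)
  have hpow1 : ∀ a : ZMod 7, ζ ^ a.val = 1 ↔ a = 0 := by
    intro a
    rw [hζ.pow_eq_one_iff_dvd, ← ZMod.val_eq_zero]
    have := a.val_lt
    omega
  have hval : ∀ a b : ZMod 7, ζ ^ a.val = ζ ^ b.val ↔ a = b := by
    intro a b
    constructor
    · intro h
      exact ZMod.val_injective 7 (hζ.pow_inj a.val_lt b.val_lt h)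
    · rintro rfl; rfl
  refine ⟨?_, ?_, ?_⟩
  · ext ⟨a, b⟩
    simp only [projStabilizer, Set.mem_setOf_eq, SetLike.mem_coe,
      AddSubgroup.mem_zmultiples_iff]
    constructor
    · rintro ⟨c, hc, h⟩
      have h0 := congrFun h 0
      have h2 := congrFun h 2
      simp [diagAct, hne] at h0 h2
      rw [← h0] at h2
      have hb0 : b = 0 := (hpow1 b).mp h2
      refine ⟨(a.val : ℤ), ?_⟩
      rw [Prod.ext_iff]
      refine ⟨?_, ?_⟩
      · show (a.val : ℤ) • (1 : ZMod 7) = a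
        exact zmod_smul_cast a
      · show (a.val : ℤ) • (0 : ZMod 7) = b
        simp [hb0]
    · rintro ⟨k, hk⟩
      obtain ⟨ha, hb⟩ := Prod.ext_iff.mp hk
      subst ha; subst hb
      refine ⟨1, one_ne_zero, ?_⟩
      funext i
      fin_cases i <;>
        simp [diagAct, Prod.smul_def, ZMod.val_zero]
  · ext ⟨a, b⟩
    simp only [projStabilizer, Set.mem_setOf_eq, SetLike.mem_coe,
      AddSubgroup.mem_zmultiples_iff]
    constructor
    · rintro ⟨c, hc, h⟩
      have h0 := congrFun h 0
      have h1 := congrFun h 1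
      simp [diagAct, hne] at h0 h1
      rw [← h0] at h1
      have ha0 : a = 0 := (hpow1 a).mp h1
      refine ⟨(b.val : ℤ), ?_⟩
      rw [Prod.ext_iff]
      refine ⟨?_, ?_⟩
      · show (b.val : ℤ) • (0 : ZMod 7) = a
        simp [ha0]
      · show (b.val : ℤ) • (1 : ZMod 7) = b
        exact zmod_smul_cast b
    · rintro ⟨k, hk⟩
      obtain ⟨ha, hb⟩ := Prod.ext_iff.mp hk
      subst ha; subst hb
      refine ⟨1, one_ne_zero, ?_⟩
      funext i
      fin_cases i <;>
        simp [diagAct, Prod.smul_def, ZMod.val_zero]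
  · ext ⟨a, b⟩
    simp only [projStabilizer, Set.mem_setOf_eq, SetLike.mem_coe,
      AddSubgroup.mem_zmultiples_iff]
    constructor
    · rintro ⟨c, hc, h⟩
      have h1 := congrFun h 1
      have h2 := congrFun h 2
      simp [diagAct, hne] at h1 h2
      -- h1 : ζ ^ a.val = c, h2 : ζ ^ b.val = c (hopefully)
      have hba : b = a := by
        apply (hval b a).mp
        rw [h1, h2]
      subst hba
      refine ⟨-(b.val : ℤ), ?_⟩
      have h6 : (6 : ZMod 7) = -1 := by decide
      rw [Prod.ext_iff]
      refine ⟨?_, ?_⟩ <;>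
      · show -(b.val : ℤ) • (6 : ZMod 7) = b
        rw [zsmul_eq_mul, h6]
        push_cast
        rw [ZMod.natCast_val, ZMod.cast_id]
        ring
    · rintro ⟨k, hk⟩
      obtain ⟨ha, hb⟩ := Prod.ext_iff.mp hk
      subst ha; subst hb
      refine ⟨ζ ^ ((k • ((6:ZMod 7), (6:ZMod 7))).1.val), pow_ne_zero _ hne, ?_⟩
      funext i
      fin_cases i <;>
        simp [diagAct, Prod.smul_def]
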